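/- There exists a constant C > 0 such that for all integers n ≥ 2 and N ∈ [1..n] with N dividing n and n/(2N) an integer, in the second-phase process with standard bit mutation, the expected number of function evaluations until, for every j ∈ [0..n], some offspring with exactly j ones has been generated, is at most C·n^{n/(2N)}·N·ln n. -/

import Mathlib

open scoped ENNReal Classical

noncomputable section

/-- Bit strings of length `n`. -/
abbrev BitString (n : ℕ) : Type := Fin n → Bool

/-- The number of ones of a bit string. -/
def ones {n : ℕ} (x : BitString n) : ℕ := (Finset.univ.filter (fun i => x i = true)).card

/-- Hamming distance. -/
def hamming {n : ℕ} (x y : BitString n) : ℕ := (Finset.univ.filter (fun i => x i ≠ y i)).card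

/-- `mutOp` is standard bit mutation: each of the `n` bits of the parent is flipped
independently with probability `1/n`. -/
def IsStandardBitMutation (n : ℕ) (mutOp : BitString n → PMF (BitString n)) : Prop :=
  ∀ x y : BitString n,
    mutOp x y = ENNReal.ofReal ((1 / n : ℝ) ^ hamming x y * (1 - 1 / n : ℝ) ^ (n - hamming x y))

/-- The normalization constant `C_β = ∑_{i=1}^n i^{-β}` of the power-law distribution. -/
def powC (β : ℝ) (n : ℕ) : ℝ := ∑ i ∈ Finset.Icc 1 n, (i : ℝ) ^ (-β)

/-- `mutOp` is power-law mutation with exponent `β`: a mutation strength `X ∈ [1..n]` is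
sampled with `Pr[X = i] = i^{-β}/C_β`, and then a uniformly random subset of positions of
size `X` is flipped. -/
def IsPowerLawMutation (n : ℕ) (β : ℝ) (mutOp : BitString n → PMF (BitString n)) : Prop :=
  ∀ x y : BitString n,
    mutOp x y =
      if hamming x y = 0 then 0
      else ENNReal.ofReal
        ((hamming x y : ℝ) ^ (-β) / powC β n / (n.choose (hamming x y) : ℝ))

/-- One round of the second-phase process: for each `i ∈ [0..N]` (independently), an
offspring is generated by mutating the `i`-th parent, and its number of ones is added to
the set `A` of one-counts generated so far. -/
def roundStep (n N : ℕ) (mutOp : BitString n → PMF (BitString n))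
    (par : Fin (N + 1) → BitString n) (A : Set ℕ) : PMF (Set ℕ) :=
  (List.finRange (N + 1)).foldl
    (fun p i => p.bind fun B => (mutOp (par i)).map fun y => insert (ones y) B)
    (PMF.pure A)

/-- The law of the set of one-counts of offspring generated during the first `t` rounds of
the second-phase process, where `par t i` is the `i`-th parent used in round `t`. -/
def coveredPMF (n N : ℕ) (mutOp : BitString n → PMF (BitString n))
    (par : ℕ → Fin (N + 1) → BitString n) : ℕ → PMF (Set ℕ)
  | 0 => PMF.pure ∅
  | t + 1 => (coveredPMF n N mutOp par t).bind (roundStep n N mutOp (par t))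

/-- The expected number of function evaluations (`N + 1` per round) of the second-phase
process until every one-count in `target` has been realized by some offspring: since the
covered set only grows, this is `(N+1) · ∑_t Pr[T > t]` where `T` is the number of rounds
needed. -/
def phase2Evals (n N : ℕ) (mutOp : BitString n → PMF (BitString n))
    (par : ℕ → Fin (N + 1) → BitString n) (target : Set ℕ) : ℝ≥0∞ :=
  ((N : ℝ≥0∞) + 1) *
    ∑' t, (coveredPMF n N mutOp par t).toOuterMeasure {A | ¬ target ⊆ A}

/-! ### Auxiliary lemmas -/

lemma ones_le {n : ℕ} (x : BitString n) : ones x ≤ n := by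
  have := Finset.card_filter_le (Finset.univ : Finset (Fin n)) (fun i => x i = true)
  simpa [ones] using this

lemma exists_ones_close {n : ℕ} (x : BitString n) (j : ℕ) (hj : j ≤ n) :
    ∃ y : BitString n, ones y = j ∧ hamming x y ≤ (j - ones x) + (ones x - j) := by
  classical
  have hkn : ones x ≤ n := ones_le x
  have hsplit := Finset.card_filter_add_card_filter_not
    (s := (Finset.univ : Finset (Fin n))) (p := fun i => x i = true)
  rw [Finset.card_univ, Fintype.card_fin] at hsplit
  rcases le_total (ones x) j with hkj | hjk
  · have hcard : j - ones x ≤ (Finset.univ.filter (fun i => ¬ x i = true)).card := by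
      have : (Finset.univ.filter (fun i => ¬ x i = true)).card = n - ones x := by
        simp only [ones] at hsplit ⊢; omega
      omega
    obtain ⟨S, hSsub, hScard⟩ := Finset.exists_subset_card_eq hcard
    have hSfalse : ∀ i ∈ S, x i = false := by
      intro i hi
      have := (Finset.mem_filter.mp (hSsub hi)).2
      simpa using this
    refine ⟨fun i => x i || decide (i ∈ S), ?_, ?_⟩
    · have hset : Finset.univ.filter (fun i => (x i || decide (i ∈ S)) = true)
          = Finset.univ.filter (fun i => x i = true) ∪ S := by
        ext i
        simp [Finset.mem_filter, Finset.mem_union]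
      have hdisj : Disjoint (Finset.univ.filter (fun i => x i = true)) S := by
        rw [Finset.disjoint_left]
        intro i hi hiS
        have := hSfalse i hiS
        simp_all
      rw [ones, hset, Finset.card_union_of_disjoint hdisj, hScard]
      simp only [ones] at *
      omega
    · have hset : Finset.univ.filter (fun i => x i ≠ (x i || decide (i ∈ S))) = S := by
        ext i
        simp only [Finset.mem_filter, Finset.mem_univ, true_and]
        constructor
        · intro h
          by_contra hiS
          simp [hiS] at h
        · intro hiS
          simp [hiS, hSfalse i hiS]
      rw [hamming, hset, hScard]
      omega
  · have hcard : ones x - j ≤ (Finset.univ.filter (fun i => x i = true)).card := by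
      simp only [ones] at *; omega
    obtain ⟨S, hSsub, hScard⟩ := Finset.exists_subset_card_eq hcard
    have hStrue : ∀ i ∈ S, x i = true := by
      intro i hi
      exact (Finset.mem_filter.mp (hSsub hi)).2
    refine ⟨fun i => x i && !(decide (i ∈ S)), ?_, ?_⟩
    · have hset : Finset.univ.filter (fun i => (x i && !(decide (i ∈ S))) = true)
          = Finset.univ.filter (fun i => x i = true) \ S := by
        ext i
        simp [Finset.mem_filter, Finset.mem_sdiff]
      rw [ones, hset, Finset.card_sdiff_of_subset hSsub, hScard]
      simp only [ones] at *
      omega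
    · have hset : Finset.univ.filter (fun i => x i ≠ (x i && !(decide (i ∈ S)))) = S := by
        ext i
        simp only [Finset.mem_filter, Finset.mem_univ, true_and]
        constructor
        · intro h
          by_contra hiS
          simp [hiS] at h
        · intro hiS
          simp [hiS, hStrue i hiS]
      rw [hamming, hset, hScard]
      omega

lemma pmf_om_le_one {α : Type*} (p : PMF α) (s : Set α) : p.toOuterMeasure s ≤ 1 := by
  rw [PMF.toOuterMeasure_apply, ← p.tsum_coe]
  exact ENNReal.tsum_le_tsum fun a => Set.indicator_le_self s p a

lemma pmf_om_compl {α : Type*} (p : PMF α) (s : Set α) :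
    p.toOuterMeasure sᶜ = 1 - p.toOuterMeasure s := by
  refine ENNReal.eq_sub_of_add_eq
    (ne_of_lt (lt_of_le_of_lt (pmf_om_le_one p s) ENNReal.one_lt_top)) ?_
  rw [PMF.toOuterMeasure_apply, PMF.toOuterMeasure_apply, ← ENNReal.tsum_add, ← p.tsum_coe]
  congr 1
  funext a
  exact congrFun (Set.indicator_compl_add_self s p) a

lemma pmf_om_singleton_le {α : Type*} (p : PMF α) (s : Set α) (a : α) (ha : a ∈ s) :
    p a ≤ p.toOuterMeasure s := by
  rw [PMF.toOuterMeasure_apply]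
  have : p a = s.indicator p a := by simp [Set.indicator_of_mem ha]
  rw [this]
  exact ENNReal.le_tsum a

section fold

variable {n N : ℕ} (mutOp : BitString n → PMF (BitString n)) (par : Fin (N + 1) → BitString n)
  (j : ℕ)

/-- One offspring-generation step of a round. -/
def stepF : PMF (Set ℕ) → Fin (N + 1) → PMF (Set ℕ) :=
  fun p i => p.bind fun B => (mutOp (par i)).map fun y => insert (ones y) B

lemma roundStep_eq (A : Set ℕ) :
    roundStep n N mutOp par A = (List.finRange (N + 1)).foldl (stepF mutOp par) (PMF.pure A) :=
  rfl

lemma step_om (p : PMF (Set ℕ)) (i : Fin (N + 1)) :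
    (stepF mutOp par p i).toOuterMeasure {A | j ∉ A}
      = (mutOp (par i)).toOuterMeasure {y | ones y ≠ j} * p.toOuterMeasure {A | j ∉ A} := by
  rw [stepF, PMF.toOuterMeasure_bind_apply]
  have hcong : ∀ A : Set ℕ,
      p A * ((mutOp (par i)).map fun y => insert (ones y) A).toOuterMeasure {A | j ∉ A}
        = ({A : Set ℕ | j ∉ A}.indicator p A)
            * (mutOp (par i)).toOuterMeasure {y | ones y ≠ j} := by
    intro A
    rw [PMF.toOuterMeasure_map_apply]
    by_cases hA : j ∈ A
    · have hempty : (fun y => insert (ones y) A) ⁻¹' {A | j ∉ A} = (∅ : Set (BitString n)) := by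
        ext y; simp [hA]
      rw [hempty]
      have h0 : (mutOp (par i)).toOuterMeasure ∅ = 0 := by
        rw [PMF.toOuterMeasure_apply]; simp
      rw [h0, Set.indicator_of_notMem (by simpa using hA)]
      simp
    · have hpre : (fun y => insert (ones y) A) ⁻¹' {A | j ∉ A}
          = {y : BitString n | ones y ≠ j} := by
        ext y; simp [hA, eq_comm]
      rw [hpre, Set.indicator_of_mem (by simpa using hA)]
  rw [tsum_congr hcong, ENNReal.tsum_mul_right, ← PMF.toOuterMeasure_apply, mul_comm]

lemma fold_om (l : List (Fin (N + 1))) (p : PMF (Set ℕ)) :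
    (l.foldl (stepF mutOp par) p).toOuterMeasure {A | j ∉ A}
      = (l.map fun i => (mutOp (par i)).toOuterMeasure {y | ones y ≠ j}).prod
          * p.toOuterMeasure {A | j ∉ A} := by
  induction l generalizing p with
  | nil => simp
  | cons i l ih =>
      rw [List.foldl_cons, ih, step_om, List.map_cons, List.prod_cons]
      ring

lemma list_prod_le_one {l : List ℝ≥0∞} (h1 : ∀ x ∈ l, x ≤ 1) : l.prod ≤ 1 := by
  induction l with
  | nil => simp
  | cons b l ih =>
      rw [List.prod_cons]
      calc b * l.prod ≤ 1 * 1 :=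
            mul_le_mul' (h1 b (List.mem_cons_self))
              (ih fun x hx => h1 x (List.mem_cons_of_mem _ hx))
        _ = 1 := one_mul 1

lemma list_prod_le_of_mem {l : List ℝ≥0∞} (h1 : ∀ x ∈ l, x ≤ 1) {a : ℝ≥0∞} (ha : a ∈ l) :
    l.prod ≤ a := by
  induction l with
  | nil => simp at ha
  | cons b l ih =>
      rw [List.prod_cons]
      rcases List.mem_cons.mp ha with rfl | ha'
      · calc a * l.prod ≤ a * 1 := by
              refine mul_le_mul_right ?_ a
              exact list_prod_le_one (fun x hx => h1 x (List.mem_cons_of_mem _ hx))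
          _ = a := mul_one a
      · calc b * l.prod ≤ 1 * a :=
              mul_le_mul' (h1 b (List.mem_cons_self))
                (ih (fun x hx => h1 x (List.mem_cons_of_mem _ hx)) ha')
          _ = a := one_mul a

lemma roundStep_om_le {q : ℝ≥0∞}
    (hhit : ∃ i : Fin (N + 1), q ≤ (mutOp (par i)).toOuterMeasure {y | ones y = j})
    (A : Set ℕ) :
    (roundStep n N mutOp par A).toOuterMeasure {A | j ∉ A}
      ≤ (1 - q) * (PMF.pure A).toOuterMeasure {A | j ∉ A} := by
  rw [roundStep_eq, fold_om]
  refine mul_le_mul' ?_ le_rfl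
  obtain ⟨i, hi⟩ := hhit
  have hmem : (mutOp (par i)).toOuterMeasure {y | ones y ≠ j}
      ∈ (List.finRange (N + 1)).map fun i => (mutOp (par i)).toOuterMeasure {y | ones y ≠ j} :=
    List.mem_map_of_mem (List.mem_finRange i)
  refine le_trans (list_prod_le_of_mem ?_ hmem) ?_
  · intro x hx
    obtain ⟨i', _, rfl⟩ := List.mem_map.mp hx
    exact pmf_om_le_one _ _
  · have hcompl : {y : BitString n | ones y ≠ j} = {y : BitString n | ones y = j}ᶜ := rfl
    rw [hcompl, pmf_om_compl]
    exact tsub_le_tsub_left hi 1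

lemma covered_om_le (par : ℕ → Fin (N + 1) → BitString n) {q : ℝ≥0∞}
    (hhit : ∀ t, ∃ i : Fin (N + 1), q ≤ (mutOp (par t i)).toOuterMeasure {y | ones y = j}) :
    ∀ t, (coveredPMF n N mutOp par t).toOuterMeasure {A | j ∉ A} ≤ (1 - q) ^ t := by
  intro t
  induction t with
  | zero =>
      rw [coveredPMF, PMF.toOuterMeasure_pure_apply]
      simp
  | succ t ih =>
      rw [coveredPMF, PMF.toOuterMeasure_bind_apply]
      calc ∑' A, (coveredPMF n N mutOp par t) A
              * (roundStep n N mutOp (par t) A).toOuterMeasure {A | j ∉ A}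
          ≤ ∑' A, (1 - q) * ({A : Set ℕ | j ∉ A}.indicator (coveredPMF n N mutOp par t) A) := by
            refine ENNReal.tsum_le_tsum fun A => ?_
            refine le_trans (mul_le_mul_right (roundStep_om_le mutOp (par t) j (hhit t) A) _) ?_
            rw [PMF.toOuterMeasure_pure_apply]
            by_cases hA : j ∈ A
            · have : A ∉ {A : Set ℕ | j ∉ A} := by simpa using hA
              rw [if_neg this, Set.indicator_of_notMem this]
              simp
            · have : A ∈ {A : Set ℕ | j ∉ A} := by simpa using hA
              rw [if_pos this, Set.indicator_of_mem this]
              rw [mul_one]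
              ring_nf
              exact le_rfl
        _ = (1 - q) * (coveredPMF n N mutOp par t).toOuterMeasure {A | j ∉ A} := by
            rw [ENNReal.tsum_mul_left, ← PMF.toOuterMeasure_apply]
        _ ≤ (1 - q) * (1 - q) ^ t := mul_le_mul_right ih _
        _ = (1 - q) ^ (t + 1) := (pow_succ' _ _).symm

end fold

lemma bad_le_sum (P : PMF (Set ℕ)) (n' : ℕ) :
    P.toOuterMeasure {A | ¬ {j | j ≤ n'} ⊆ A}
      ≤ ∑ j ∈ Finset.range (n' + 1), P.toOuterMeasure {A | j ∉ A} := by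
  calc P.toOuterMeasure {A | ¬ {j | j ≤ n'} ⊆ A}
      = ∑' A, Set.indicator {A | ¬ {j | j ≤ n'} ⊆ A} P A := PMF.toOuterMeasure_apply _ _
    _ ≤ ∑' A, ∑ j ∈ Finset.range (n' + 1), Set.indicator {A : Set ℕ | j ∉ A} P A := by
        refine ENNReal.tsum_le_tsum fun A => ?_
        by_cases hA : {j | j ≤ n'} ⊆ A
        · rw [Set.indicator_of_notMem (by simpa using hA)]
          exact zero_le
        · rw [Set.indicator_of_mem (by simpa using hA)]
          obtain ⟨j, hj, hjA⟩ := Set.not_subset.mp hA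
          have hjle : j ≤ n' := hj
          calc P A = Set.indicator {A : Set ℕ | j ∉ A} P A := by
                rw [Set.indicator_of_mem (by simpa using hjA)]
            _ ≤ ∑ j ∈ Finset.range (n' + 1), Set.indicator {A : Set ℕ | j ∉ A} P A :=
                Finset.single_le_sum (f := fun j => Set.indicator {A : Set ℕ | j ∉ A} P A)
                  (fun _ _ => zero_le) (Finset.mem_range.mpr (by omega))
    _ = ∑ j ∈ Finset.range (n' + 1), ∑' A, Set.indicator {A : Set ℕ | j ∉ A} P A :=
        Summable.tsum_finsetSum fun _ _ => ENNReal.summable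
    _ = ∑ j ∈ Finset.range (n' + 1), P.toOuterMeasure {A | j ∉ A} :=
        Finset.sum_congr rfl fun j _ => (PMF.toOuterMeasure_apply _ _).symm

lemma choose_index {N m j : ℕ} (hm : 1 ≤ m) (hj : j ≤ 2 * N * m) :
    ∃ i : Fin (N + 1), (j - i.val * (2 * m)) + (i.val * (2 * m) - j) ≤ m := by
  have h2m : 0 < 2 * m := by omega
  have hmul : (N + 1) * (2 * m) = 2 * N * m + 2 * m := by ring
  have hi : (j + m) / (2 * m) < N + 1 := by
    rw [Nat.div_lt_iff_lt_mul h2m]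
    omega
  refine ⟨⟨(j + m) / (2 * m), hi⟩, ?_⟩
  have h3 := Nat.div_add_mod (j + m) (2 * m)
  have h4 := Nat.mod_lt (j + m) h2m
  have key : ∀ e, e ≤ j + m → j + m < e + 2 * m → (j - e) + (e - j) ≤ m := by
    intros e h1 h2; omega
  apply key
  · calc (j + m) / (2 * m) * (2 * m) = 2 * m * ((j + m) / (2 * m)) := by ring
      _ ≤ j + m := by omega
  · calc j + m = 2 * m * ((j + m) / (2 * m)) + (j + m) % (2 * m) := h3.symm
      _ < (j + m) / (2 * m) * (2 * m) + 2 * m := by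
          have : 2 * m * ((j + m) / (2 * m)) = (j + m) / (2 * m) * (2 * m) := by ring
          omega

lemma hit_prob_le {n : ℕ} (hn : 2 ≤ n) {mutOp : BitString n → PMF (BitString n)}
    (hmut : IsStandardBitMutation n mutOp)
    (x : BitString n) {j m : ℕ} (hj : j ≤ n)
    (hclose : (j - ones x) + (ones x - j) ≤ m) :
    ENNReal.ofReal ((1 / (n : ℝ)) ^ m * (1 - 1 / (n : ℝ)) ^ n)
      ≤ (mutOp x).toOuterMeasure {y | ones y = j} := by
  obtain ⟨y, hy, hham⟩ := exists_ones_close x j hj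
  have hham' : hamming x y ≤ m := le_trans hham hclose
  refine le_trans ?_ (pmf_om_singleton_le _ _ y (by simpa [Set.mem_setOf_eq] using hy))
  rw [hmut x y]
  apply ENNReal.ofReal_le_ofReal
  have hn2 : (2 : ℝ) ≤ n := by exact_mod_cast hn
  have hn0 : (0 : ℝ) < n := by linarith
  have h01 : (0 : ℝ) ≤ 1 / (n : ℝ) := by positivity
  have h1le : 1 / (n : ℝ) ≤ 1 := by rw [div_le_one hn0]; linarith
  have h02 : (0 : ℝ) ≤ 1 - 1 / (n : ℝ) := by linarith
  have h2le : 1 - 1 / (n : ℝ) ≤ 1 := by linarith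
  exact mul_le_mul (pow_le_pow_of_le_one h01 h1le hham')
    (pow_le_pow_of_le_one h02 h2le (Nat.sub_le n (hamming x y)))
    (pow_nonneg h02 _) (pow_nonneg h01 _)

lemma one_sub_inv_pow_ge {n : ℕ} (hn : 2 ≤ n) : (1:ℝ)/8 ≤ (1 - 1/(n:ℝ)) ^ n := by
  have hn2 : (2:ℝ) ≤ n := by exact_mod_cast hn
  have hn0 : (0:ℝ) < n := by linarith
  have hu : (1:ℝ)/(n:ℝ) ≤ 1/2 := by
    rw [div_le_div_iff₀ hn0 (by norm_num)]; linarith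
  have hu0 : (0:ℝ) < 1/(n:ℝ) := by positivity
  have hexp : Real.exp (-(2/(n:ℝ))) ≤ 1 - 1/(n:ℝ) := by
    have ha : 1 + 2/(n:ℝ) ≤ Real.exp (2/(n:ℝ)) := by
      have := Real.add_one_le_exp (2/(n:ℝ)); linarith
    have hb : (Real.exp (2/(n:ℝ)))⁻¹ ≤ (1 + 2/(n:ℝ))⁻¹ :=
      inv_anti₀ (by positivity) ha
    have hd : (1 + 2/(n:ℝ))⁻¹ ≤ 1 - 1/(n:ℝ) := by
      rw [inv_eq_one_div, div_le_iff₀ (by positivity)]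
      have h2 : 2/(n:ℝ) = 2 * (1/(n:ℝ)) := by ring
      nlinarith [hu, hu0]
    rw [Real.exp_neg]
    exact le_trans hb hd
  have hpow : Real.exp (-(2/(n:ℝ))) ^ n ≤ (1 - 1/(n:ℝ)) ^ n :=
    pow_le_pow_left₀ (Real.exp_nonneg _) hexp n
  have hval : Real.exp (-(2/(n:ℝ))) ^ n = Real.exp (-2) := by
    rw [← Real.exp_nat_mul]
    congr 1
    field_simp
  have hexp2 : Real.exp 2 ≤ 8 := by
    have h1 : Real.exp 2 = Real.exp 1 * Real.exp 1 := by
      rw [← Real.exp_add]; norm_num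
    have := Real.exp_one_lt_d9
    nlinarith [Real.exp_pos 1]
  have h8 : (1:ℝ)/8 ≤ Real.exp (-2) := by
    rw [Real.exp_neg, one_div]
    exact inv_anti₀ (Real.exp_pos 2) hexp2
  calc (1:ℝ)/8 ≤ Real.exp (-2) := h8
    _ = Real.exp (-(2/(n:ℝ))) ^ n := hval.symm
    _ ≤ (1 - 1/(n:ℝ)) ^ n := hpow

lemma ennreal_sum_add_tsum_nat_add (f : ℕ → ℝ≥0∞) (k : ℕ) :
    ∑' i, f i = ∑ i ∈ Finset.range k, f i + ∑' i, f (i + k) := by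
  induction k with
  | zero => simp
  | succ k ih =>
      rw [ih, Finset.sum_range_succ, add_assoc]
      congr 1
      have h1 : ∑' i, f (i + k) = f (0 + k) + ∑' i, f (i + 1 + k) :=
        tsum_eq_zero_add' (f := fun i => f (i + k)) ENNReal.summable
      rw [h1, Nat.zero_add]
      congr 1
      exact tsum_congr fun i => by congr 1; omega

set_option maxHeartbeats 2000000 in
/-- In the second-phase process with standard bit mutation (parents with
`i·n/N` ones, `n/(2N)` integer), the expected number of function evaluations until, for
every `j ∈ [0..n]`, some offspring with exactly `j` ones has been generated, is
`O(n^{n/(2N)} N ln n)`. -/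
theorem phase2_standard_bit_upper :
    ∃ C : ℝ, 0 < C ∧
      ∀ n N : ℕ, 2 ≤ n → 1 ≤ N → N ≤ n → N ∣ n → 2 * N ∣ n →
        ∀ mutOp : BitString n → PMF (BitString n), IsStandardBitMutation n mutOp →
          ∀ par : ℕ → Fin (N + 1) → BitString n,
            (∀ t : ℕ, ∀ i : Fin (N + 1), ones (par t i) = (i : ℕ) * (n / N)) →
            phase2Evals n N mutOp par {j | j ≤ n}
              ≤ ENNReal.ofReal
                  (C * (n : ℝ) ^ ((n : ℝ) / (2 * N)) * N * Real.log n) := by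
  refine ⟨80, by norm_num, ?_⟩
  intro n N hn hN hNn hdvd h2dvd mutOp hmut par hpar
  obtain ⟨m, hnm⟩ := h2dvd
  have hm : 1 ≤ m := by
    rcases Nat.eq_zero_or_pos m with rfl | h
    · omega
    · exact h
  have hgN : n / N = 2 * m := by
    rw [hnm, show 2 * N * m = N * (2 * m) by ring, Nat.mul_div_cancel_left _ (by omega)]
  -- real quantities
  have hn2 : (2:ℝ) ≤ n := by exact_mod_cast hn
  have hn0 : (0:ℝ) < n := by linarith
  set r : ℝ := (1/(n:ℝ)) ^ m * (1 - 1/(n:ℝ)) ^ n with hr_def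
  have hu1 : (1:ℝ)/(n:ℝ) ≤ 1 := by rw [div_le_one hn0]; linarith
  have hu0 : (0:ℝ) < 1/(n:ℝ) := by positivity
  have h1n0 : (0:ℝ) < 1 - 1/(n:ℝ) := by
    have : (1:ℝ)/(n:ℝ) ≤ 1/2 := by rw [div_le_div_iff₀ hn0 (by norm_num)]; linarith
    linarith
  have hr_pos : 0 < r := by positivity
  have hr_le1 : r ≤ 1 := by
    have h1 : (1/(n:ℝ)) ^ m ≤ 1 := pow_le_one₀ hu0.le hu1
    have h2 : (1 - 1/(n:ℝ)) ^ n ≤ 1 := pow_le_one₀ h1n0.le (by linarith [hu0])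
    nlinarith [pow_nonneg hu0.le m, pow_nonneg h1n0.le n]
  set q : ℝ≥0∞ := ENNReal.ofReal r with hq_def
  have h1r0 : (0:ℝ) ≤ 1 - r := by linarith
  -- hitting probability of each target j in every round
  have hhit : ∀ j, j ≤ n → ∀ t : ℕ,
      ∃ i : Fin (N + 1), q ≤ (mutOp (par t i)).toOuterMeasure {y | ones y = j} := by
    intro j hj t
    obtain ⟨i, hi⟩ := choose_index (N := N) (j := j) hm (hnm ▸ hj)
    refine ⟨i, ?_⟩
    refine hit_prob_le hn hmut (par t i) hj ?_
    rw [hpar t i, hgN]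
    exact hi
  have hcov : ∀ j, j ≤ n → ∀ t : ℕ,
      (coveredPMF n N mutOp par t).toOuterMeasure {A | j ∉ A} ≤ (1 - q) ^ t :=
    fun j hj t => covered_om_le mutOp j par (hhit j hj) t
  have h1q : (1:ℝ≥0∞) - q = ENNReal.ofReal (1 - r) := by
    rw [hq_def, ENNReal.ofReal_sub 1 hr_pos.le, ENNReal.ofReal_one]
  -- union bound
  set F : ℕ → ℝ≥0∞ :=
    fun t => (coveredPMF n N mutOp par t).toOuterMeasure {A | ¬ {j | j ≤ n} ⊆ A} with hF_def
  have hbad : ∀ t, F t ≤ ((n:ℝ≥0∞) + 1) * ENNReal.ofReal ((1 - r) ^ t) := by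
    intro t
    refine le_trans (bad_le_sum _ n) ?_
    calc ∑ j ∈ Finset.range (n + 1), (coveredPMF n N mutOp par t).toOuterMeasure {A | j ∉ A}
        ≤ ∑ _j ∈ Finset.range (n + 1), (1 - q) ^ t :=
          Finset.sum_le_sum fun j hj => hcov j (by have := Finset.mem_range.mp hj; omega) t
          -- hj : j ∈ range (n+1) gives j < n + 1; need j ≤ n
      _ = ((n:ℝ≥0∞) + 1) * (1 - q) ^ t := by
          rw [Finset.sum_const, Finset.card_range, nsmul_eq_mul]
          push_cast
          ring
      _ = ((n:ℝ≥0∞) + 1) * ENNReal.ofReal ((1 - r) ^ t) := by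
          rw [h1q, ← ENNReal.ofReal_pow h1r0]
  -- tail sum
  set t0 : ℕ := ⌈Real.log ((n:ℝ) + 1) / r⌉₊ with ht0_def
  have hlog1 : (0:ℝ) ≤ Real.log ((n:ℝ) + 1) := Real.log_nonneg (by linarith)
  have hgeo : ∑' i : ℕ, ENNReal.ofReal ((1 - r) ^ i) = (ENNReal.ofReal r)⁻¹ := by
    have hpt : ∀ i : ℕ, ENNReal.ofReal ((1 - r) ^ i) = (ENNReal.ofReal (1 - r)) ^ i :=
      fun i => ENNReal.ofReal_pow h1r0 i
    rw [tsum_congr hpt, ENNReal.tsum_geometric]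
    congr 1
    rw [← ENNReal.ofReal_one, ← ENNReal.ofReal_sub 1 h1r0]
    congr 1
    ring
  have hceil : Real.log ((n:ℝ) + 1) / r ≤ (t0:ℝ) := Nat.le_ceil _
  have hpowt0 : (1 - r) ^ t0 ≤ ((n:ℝ) + 1)⁻¹ := by
    have hstep : (1 - r) ≤ Real.exp (-r) := by
      have := Real.add_one_le_exp (-r); linarith
    calc (1 - r) ^ t0 ≤ Real.exp (-r) ^ t0 := pow_le_pow_left₀ h1r0 hstep t0
      _ = Real.exp (-(r * t0)) := by
          rw [← Real.exp_nat_mul]; congr 1; ring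
      _ ≤ Real.exp (-(Real.log ((n:ℝ) + 1))) := by
          apply Real.exp_le_exp.mpr
          have : Real.log ((n:ℝ) + 1) ≤ r * t0 := by
            rw [div_le_iff₀ hr_pos] at hceil
            linarith
          linarith
      _ = ((n:ℝ) + 1)⁻¹ := by rw [Real.exp_neg, Real.exp_log (by positivity)]
  have hn1 : ((n:ℝ≥0∞) + 1) * ENNReal.ofReal ((1 - r) ^ t0) ≤ 1 := by
    have hcast : ((n:ℝ≥0∞) + 1) = ENNReal.ofReal ((n:ℝ) + 1) := by
      rw [ENNReal.ofReal_add (by positivity) zero_le_one, ENNReal.ofReal_natCast,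
        ENNReal.ofReal_one]
    rw [hcast, ← ENNReal.ofReal_mul (by positivity), ← ENNReal.ofReal_one]
    apply ENNReal.ofReal_le_ofReal
    have hn1p : (0:ℝ) < (n:ℝ) + 1 := by positivity
    calc ((n:ℝ) + 1) * (1 - r) ^ t0 ≤ ((n:ℝ) + 1) * ((n:ℝ) + 1)⁻¹ :=
          mul_le_mul_of_nonneg_left hpowt0 (by positivity)
      _ = 1 := mul_inv_cancel₀ (ne_of_gt hn1p)
  have hsum : ∑' t, F t ≤ (t0 : ℝ≥0∞) + ENNReal.ofReal r⁻¹ := by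
    rw [ennreal_sum_add_tsum_nat_add F t0]
    refine add_le_add ?_ ?_
    · calc ∑ i ∈ Finset.range t0, F i ≤ ∑ _i ∈ Finset.range t0, 1 :=
            Finset.sum_le_sum fun i _ => pmf_om_le_one _ _
        _ = (t0 : ℝ≥0∞) := by simp
    · calc ∑' i : ℕ, F (i + t0)
          ≤ ∑' i : ℕ, (((n:ℝ≥0∞) + 1) * ENNReal.ofReal ((1 - r) ^ t0))
              * ENNReal.ofReal ((1 - r) ^ i) := by
            refine ENNReal.tsum_le_tsum fun i => ?_
            have heq : (((n:ℝ≥0∞) + 1) * ENNReal.ofReal ((1 - r) ^ t0))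
                * ENNReal.ofReal ((1 - r) ^ i)
                = ((n:ℝ≥0∞) + 1) * ENNReal.ofReal ((1 - r) ^ (i + t0)) := by
              rw [mul_assoc, ← ENNReal.ofReal_mul (by positivity), ← pow_add, add_comm t0 i]
            exact le_trans (hbad (i + t0)) (le_of_eq heq.symm)
        _ = (((n:ℝ≥0∞) + 1) * ENNReal.ofReal ((1 - r) ^ t0))
              * ∑' i : ℕ, ENNReal.ofReal ((1 - r) ^ i) := ENNReal.tsum_mul_left
        _ = (((n:ℝ≥0∞) + 1) * ENNReal.ofReal ((1 - r) ^ t0)) * (ENNReal.ofReal r)⁻¹ := by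
            rw [hgeo]
        _ ≤ 1 * (ENNReal.ofReal r)⁻¹ := mul_le_mul_left hn1 _
        _ = ENNReal.ofReal r⁻¹ := by rw [one_mul, ← ENNReal.ofReal_inv_of_pos hr_pos]
  -- key real inequality
  have hN1 : (1:ℝ) ≤ N := by exact_mod_cast hN
  have hone_rinv : (1:ℝ) ≤ r⁻¹ := (one_le_inv₀ hr_pos).mpr hr_le1
  have hri0 : (0:ℝ) ≤ r⁻¹ := by positivity
  have hrinv_le : r⁻¹ ≤ 8 * (n:ℝ) ^ m := by
    have hc : (1:ℝ)/8 * (1/(n:ℝ)) ^ m ≤ r := by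
      have := mul_le_mul_of_nonneg_left (one_sub_inv_pow_ge hn) (pow_nonneg hu0.le m)
      calc (1:ℝ)/8 * (1/(n:ℝ)) ^ m = (1/(n:ℝ)) ^ m * (1/8) := by ring
        _ ≤ (1/(n:ℝ)) ^ m * (1 - 1/(n:ℝ)) ^ n := this
        _ = r := rfl
    have hcpos : (0:ℝ) < 1/8 * (1/(n:ℝ)) ^ m := by positivity
    calc r⁻¹ ≤ ((1:ℝ)/8 * (1/(n:ℝ)) ^ m)⁻¹ := inv_anti₀ hcpos hc
      _ = 8 * (n:ℝ) ^ m := by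
          rw [mul_inv, one_div, inv_inv, one_div, inv_pow, inv_inv]
  have hlogn_pos : 0 < Real.log n := Real.log_pos (by linarith)
  have hlog2n : Real.log ((n:ℝ) + 1) ≤ 2 * Real.log n := by
    have h1 : ((n:ℝ) + 1) ≤ (n:ℝ) ^ 2 := by nlinarith
    calc Real.log ((n:ℝ) + 1) ≤ Real.log ((n:ℝ) ^ 2) := Real.log_le_log (by positivity) h1
      _ = 2 * Real.log n := by rw [Real.log_pow]; push_cast; ring
  have h2le3 : (2:ℝ) ≤ 3 * Real.log n := by
    have hd9 := Real.log_two_gt_d9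
    have hl : Real.log 2 ≤ Real.log n := Real.log_le_log (by norm_num) (by exact_mod_cast hn)
    linarith
  have ht0le : (t0:ℝ) ≤ Real.log ((n:ℝ) + 1) / r + 1 :=
    le_of_lt (Nat.ceil_lt_add_one (div_nonneg hlog1 hr_pos.le))
  have keyreal : ((N:ℝ) + 1) * ((t0:ℝ) + r⁻¹) ≤ 80 * (n:ℝ) ^ m * N * Real.log n := by
    have hmid : Real.log ((n:ℝ) + 1) / r + 1 + r⁻¹ ≤ 5 * Real.log n * r⁻¹ := by
      rw [div_eq_mul_inv]
      have hA := mul_le_mul_of_nonneg_right hlog2n hri0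
      have hB := mul_le_mul_of_nonneg_right h2le3 hri0
      nlinarith [hA, hB, hone_rinv]
    calc ((N:ℝ) + 1) * ((t0:ℝ) + r⁻¹)
        ≤ (2 * (N:ℝ)) * ((Real.log ((n:ℝ) + 1) / r + 1) + r⁻¹) := by
          apply mul_le_mul (by linarith) (by linarith) (by positivity) (by positivity)
      _ ≤ (2 * (N:ℝ)) * (5 * Real.log n * r⁻¹) :=
          mul_le_mul_of_nonneg_left hmid (by positivity)
      _ ≤ (2 * (N:ℝ)) * (5 * Real.log n * (8 * (n:ℝ) ^ m)) :=
          mul_le_mul_of_nonneg_left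
            (mul_le_mul_of_nonneg_left hrinv_le (by positivity)) (by positivity)
      _ = 80 * (n:ℝ) ^ m * N * Real.log n := by ring
  -- rpow identification
  have hrpow : (n:ℝ) ^ ((n:ℝ) / (2 * (N:ℝ))) = (n:ℝ) ^ m := by
    have hcast : (n:ℝ) / (2 * (N:ℝ)) = (m:ℝ) := by
      have hnr : (n:ℝ) = 2 * (N:ℝ) * (m:ℝ) := by exact_mod_cast hnm
      rw [hnr]
      field_simp
    rw [hcast, Real.rpow_natCast]
  -- conclude
  rw [phase2Evals]
  calc ((N:ℝ≥0∞) + 1) * ∑' t, (coveredPMF n N mutOp par t).toOuterMeasure {A | ¬ {j | j ≤ n} ⊆ A}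
      ≤ ((N:ℝ≥0∞) + 1) * ((t0 : ℝ≥0∞) + ENNReal.ofReal r⁻¹) := mul_le_mul_right hsum _
    _ = ENNReal.ofReal (((N:ℝ) + 1) * ((t0:ℝ) + r⁻¹)) := by
        have eN : ((N:ℝ≥0∞) + 1) = ENNReal.ofReal ((N:ℝ) + 1) := by
          rw [ENNReal.ofReal_add (by positivity) zero_le_one, ENNReal.ofReal_natCast,
            ENNReal.ofReal_one]
        have et : ((t0:ℕ) : ℝ≥0∞) = ENNReal.ofReal ((t0:ℕ) : ℝ) := (ENNReal.ofReal_natCast t0).symm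
        rw [eN, et, ← ENNReal.ofReal_add (by positivity) (by positivity),
          ← ENNReal.ofReal_mul (by positivity)]
    _ ≤ ENNReal.ofReal (80 * (n:ℝ) ^ ((n:ℝ) / (2 * (N:ℝ))) * N * Real.log n) := by
        apply ENNReal.ofReal_le_ofReal
        rw [hrpow]
        exact keyreal

end
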